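/- Let L be a levellised (n+1)-lattice with n > 1 and L̄ = L \ {n}. For a, b ∈ L̄, the join of a and b in L̄ equals their join in L, and the meet of a and b in L̄ equals their meet in L unless that meet equals n, in which case their meet in L̄ is 0. -/

import Mathlib

namespace PaperLattice

variable {N : ℕ}

/-- Depth: one less than the maximum length of a chain from `t` down to `a` w.r.t. `le`. -/
noncomputable def dep (le : Fin N → Fin N → Prop) (t a : Fin N) : ℕ :=
  sSup {k | ∃ l : List (Fin N), List.Chain' (fun x y => le y x ∧ y ≠ x) l ∧
    l.head? = some t ∧ l.getLast? = some a ∧ l.length = k + 1}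

/-- The `d`-th level: elements of depth `d`. -/
noncomputable def lev (le : Fin N → Fin N → Prop) (t : Fin N) (d : ℕ) : Set (Fin N) :=
  {a | dep le t a = d}

/-- A labelled poset is levellised if depth is monotone in the nonzero labels. -/
def Levellised (le : Fin N → Fin N → Prop) (t : Fin N) : Prop :=
  ∀ i j : Fin N, 0 < (i : ℕ) → (i : ℕ) ≤ (j : ℕ) → dep le t i ≤ dep le t j

def lt' (le : Fin N → Fin N → Prop) (a b : Fin N) : Prop := le a b ∧ a ≠ b

/-- `b` covers `a`. -/
def CovByRel (le : Fin N → Fin N → Prop) (a b : Fin N) : Prop :=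
  lt' le a b ∧ ∀ x, lt' le a x → lt' le x b → False

/-- The covering set of `a`. -/
def cov (le : Fin N → Fin N → Prop) (a : Fin N) : Set (Fin N) := {b | CovByRel le a b}

/-- The up-set of `A`. -/
def upset (le : Fin N → Fin N → Prop) (A : Set (Fin N)) : Set (Fin N) :=
  {x | ∃ a ∈ A, le a x}

def AntichainRel (le : Fin N → Fin N → Prop) (A : Set (Fin N)) : Prop :=
  ∀ a ∈ A, ∀ b ∈ A, a ≠ b → ¬ le a b

/-- Binary weight of a set of labels. -/
noncomputable def wt (A : Set (Fin N)) : ℕ :=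
  ∑ j : Fin N, A.indicator (fun j => 2 ^ (j : ℕ)) j

/-- `z` is a bottom and `o` a top for `le`. -/
def Bounds (le : Fin N → Fin N → Prop) (z o : Fin N) : Prop :=
  (∀ a, le z a) ∧ (∀ a, le a o)

/-- The order obtained from `le` by adding `m` new atoms, the `i`-th having covering set `A i`. -/
def extLe {n m : ℕ} (le : Fin n → Fin n → Prop) (A : Fin m → Set (Fin n)) :
    Fin (n + m) → Fin (n + m) → Prop := fun x y =>
  if hx : (x : ℕ) < n then
    if hy : (y : ℕ) < n then le ⟨x, hx⟩ ⟨y, hy⟩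
    else (x : ℕ) = 0
  else
    if hy : (y : ℕ) < n then
      (⟨y, hy⟩ : Fin n) ∈ upset le (A ⟨(x : ℕ) - n, by have := x.isLt; omega⟩)
    else x = y

/-- The relabelled order `π(L)`. -/
def permLe {n : ℕ} (π : Equiv.Perm (Fin n)) (le : Fin n → Fin n → Prop) :
    Fin n → Fin n → Prop := fun a b => le (π.symm a) (π.symm b)


def depSet (le : Fin N → Fin N → Prop) (t a : Fin N) : Set ℕ :=
  {k | ∃ l : List (Fin N), List.Chain' (fun x y => le y x ∧ y ≠ x) l ∧
    l.head? = some t ∧ l.getLast? = some a ∧ l.length = k + 1}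

lemma dep_eq (le : Fin N → Fin N → Prop) (t a : Fin N) : dep le t a = sSup (depSet le t a) := rfl

lemma depSet_bddAbove (L : Lattice (Fin N)) (t a : Fin N) : BddAbove (depSet L.le t a) := by
  refine ⟨N, fun k hk => ?_⟩
  obtain ⟨l, hc, -, -, hlen⟩ := hk
  have htrans : Transitive (fun x y : Fin N => L.le y x ∧ y ≠ x) := by
    rintro x y w ⟨h1, h2⟩ ⟨h3, h4⟩
    refine ⟨L.le_trans _ _ _ h3 h1, fun he => h4 ?_⟩
    subst he
    exact L.le_antisymm _ _ h3 h1
  haveI : IsTrans (Fin N) (fun x y : Fin N => L.le y x ∧ y ≠ x) := ⟨htrans⟩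
  have hp := List.isChain_iff_pairwise.mp hc
  have hnd : l.Nodup := hp.imp (fun h => h.2.symm)
  have := hnd.length_le_card
  simp [Fintype.card_fin] at this
  omega

lemma depSet_nonempty (L : Lattice (Fin N)) (t a : Fin N) (htop : ∀ x, L.le x t) :
    (depSet L.le t a).Nonempty := by
  by_cases h : a = t
  · exact ⟨0, [t], by simp [List.Chain'], by simp, by simp [h], by simp⟩
  · exact ⟨1, [t, a], by simp [htop a, h, List.Chain'], by simp, by simp, by simp⟩

lemma dep_lt (L : Lattice (Fin N)) (t : Fin N) (htop : ∀ x, L.le x t) (a c : Fin N)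
    (hle : L.le c a) (hne : c ≠ a) : dep L.le t a + 1 ≤ dep L.le t c := by
  have hmem := Nat.sSup_mem (depSet_nonempty L t a htop) (depSet_bddAbove L t a)
  obtain ⟨l, hc, hh, hl, hlen⟩ := hmem
  have hlne : l ≠ [] := by rintro rfl; simp at hh
  have : dep L.le t a + 1 ∈ depSet L.le t c := by
    refine ⟨l ++ [c], ?_, ?_, ?_, ?_⟩
    · rw [List.Chain', List.isChain_append]
      refine ⟨hc, List.isChain_singleton _, fun x hx y hy => ?_⟩
      simp at hy; subst hy
      rw [hl] at hx; simp at hx; subst hx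
      exact ⟨hle, hne⟩
    · rw [List.head?_append_of_ne_nil _ hlne]; exact hh
    · rw [List.getLast?_append_of_ne_nil _ (by simp)]; simp
    · simp [hlen, dep_eq]
  exact le_csSup (depSet_bddAbove L t c) this


/-- in `L̄ = L \ {n}`, joins agree with those of `L`, and meets agree unless the
meet in `L` is the removed atom `n`, in which case the meet in `L̄` is `0`. -/
theorem statement3 {n : ℕ} (hn : 1 < n) (L : Lattice (Fin (n + 1)))
    (hb : Bounds L.le ⟨0, by omega⟩ ⟨1, by omega⟩)
    (hlev : Levellised L.le ⟨1, by omega⟩) :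
    ∃ M : Lattice (Fin n),
      (∀ a b : Fin n, M.le a b ↔ L.le a.castSucc b.castSucc) ∧
      ∀ a b : Fin n,
        Fin.castSucc (M.sup a b) = L.sup a.castSucc b.castSucc ∧
        (L.inf a.castSucc b.castSucc = Fin.last n → M.inf a b = ⟨0, by omega⟩) ∧
        (L.inf a.castSucc b.castSucc ≠ Fin.last n →
          Fin.castSucc (M.inf a b) = L.inf a.castSucc b.castSucc) := by
  classical
  obtain ⟨hbot, htop⟩ := hb
  -- the removed element `n` is an atom
  have hatom : ∀ c : Fin (n + 1), L.le c (Fin.last n) → c = ⟨0, by omega⟩ ∨ c = Fin.last n := by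
    intro c hc
    by_contra h
    push_neg at h
    obtain ⟨hcz, hcl⟩ := h
    have h1 : dep L.le ⟨1, by omega⟩ (Fin.last n) + 1 ≤ dep L.le ⟨1, by omega⟩ c :=
      dep_lt L _ htop _ _ hc hcl
    have hcv : 0 < (c : ℕ) := by
      rcases Nat.eq_zero_or_pos (c : ℕ) with h | h
      · exact absurd (Fin.ext h) hcz
      · exact h
    have h2 : dep L.le ⟨1, by omega⟩ c ≤ dep L.le ⟨1, by omega⟩ (Fin.last n) :=
      hlev c (Fin.last n) hcv (by simpa [Fin.last] using Nat.le_of_lt_succ c.isLt)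
    omega
  have hcsne : ∀ a : Fin n, a.castSucc ≠ Fin.last n := by
    intro a h
    have := congrArg Fin.val h
    simp [Fin.last] at this
    omega
  have hsupne : ∀ a b : Fin n, L.sup a.castSucc b.castSucc ≠ Fin.last n := by
    intro a b h
    have ha : L.le a.castSucc (Fin.last n) := h ▸ L.le_sup_left _ _
    have hb' : L.le b.castSucc (Fin.last n) := h ▸ L.le_sup_right _ _
    have ha0 : a.castSucc = ⟨0, by omega⟩ := (hatom _ ha).resolve_right (hcsne a)
    have hb0 : b.castSucc = ⟨0, by omega⟩ := (hatom _ hb').resolve_right (hcsne b)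
    rw [ha0, hb0] at h
    have hz : L.le (L.sup ⟨0, by omega⟩ ⟨0, by omega⟩) ⟨0, by omega⟩ :=
      L.sup_le _ _ _ (L.le_refl _) (L.le_refl _)
    rw [h] at hz
    have := (hatom _ (L.le_refl (Fin.last n))).resolve_left ?_
    · have h0 : (Fin.last n : Fin (n+1)) = ⟨0, by omega⟩ :=
        L.le_antisymm _ _ hz (hbot _)
      have := congrArg Fin.val h0
      simp [Fin.last] at this
      omega
    · intro hl
      have := congrArg Fin.val hl
      simp [Fin.last] at this
      omega
  refine ⟨{
    le := fun a b => L.le a.castSucc b.castSucc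
    le_refl := fun a => L.le_refl _
    le_trans := fun a b c hab hbc => L.le_trans _ _ _ hab hbc
    le_antisymm := fun a b h1 h2 => Fin.castSucc_injective _ (L.le_antisymm _ _ h1 h2)
    lt := fun a b => L.lt a.castSucc b.castSucc
    lt_iff_le_not_ge := fun a b => L.lt_iff_le_not_ge _ _
    sup := fun a b => (L.sup a.castSucc b.castSucc).castPred (hsupne a b)
    le_sup_left := fun a b => by
      rw [Fin.castSucc_castPred]; exact L.le_sup_left _ _
    le_sup_right := fun a b => by
      rw [Fin.castSucc_castPred]; exact L.le_sup_right _ _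
    sup_le := fun a b c h1 h2 => by
      rw [Fin.castSucc_castPred]; exact L.sup_le _ _ _ h1 h2
    inf := fun a b =>
      if h : L.inf a.castSucc b.castSucc = Fin.last n then ⟨0, by omega⟩
      else (L.inf a.castSucc b.castSucc).castPred h
    inf_le_left := fun a b => by
      split
      · exact hbot _
      · rw [Fin.castSucc_castPred]; exact L.inf_le_left _ _
    inf_le_right := fun a b => by
      split
      · exact hbot _
      · rw [Fin.castSucc_castPred]; exact L.inf_le_right _ _
    le_inf := fun x a b h1 h2 => by
      have hx : L.le x.castSucc (L.inf a.castSucc b.castSucc) := L.le_inf _ _ _ h1 h2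
      split
      · rename_i h
        rw [h] at hx
        have hx0 : x.castSucc = ⟨0, by omega⟩ := (hatom _ hx).resolve_right (hcsne x)
        rw [hx0]
        exact L.le_refl _
      · rw [Fin.castSucc_castPred]; exact hx }, fun a b => Iff.rfl, fun a b => ?_⟩
  refine ⟨Fin.castSucc_castPred _ _, fun h => ?_, fun h => ?_⟩
  · dsimp only
    show (if h : _ then _ else _) = _
    rw [dif_pos h]
  · dsimp only
    show Fin.castSucc (if h : _ then _ else _) = _
    rw [dif_neg h, Fin.castSucc_castPred]

end PaperLattice
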